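/- For every ε > 0 there exists a constant C_ε > 0 such that the following holds. Let U ≥ 1 be a real number, let M, N be positive integers, and let (a_{m,n})_{1 ≤ m ≤ M, 1 ≤ n ≤ N} be complex numbers supported on coprime pairs, i.e. a_{m,n} = 0 whenever gcd(m,n) ≠ 1. Then ∫_{-U}^{U} |∑_{n=1}^{N} ∑_{m=1}^{M} a_{m,n} (m/n)^{iu}|^2 du ≤ C_ε (MN)^ε (U + MN) ∑_{m=1}^{M} ∑_{n=1}^{N} |a_{m,n}|^2. -/

import Mathlib

open MeasureTheory Complex Finset


lemma ls_kernel_le_U {U : ℝ} (hU : 0 ≤ U) (θ : ℝ) :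
    ‖∫ u in (-U)..U, Complex.exp (Complex.I * u * θ)‖ ≤ 2 * U := by
  have h := intervalIntegral.norm_integral_le_of_norm_le_const
      (C := 1) (f := fun u : ℝ => Complex.exp (Complex.I * u * θ)) (a := -U) (b := U) ?_
  · have h2 : (1:ℝ) * |U - (-U)| = 2 * U := by
      rw [_root_.abs_of_nonneg (by linarith : (0:ℝ) ≤ U - (-U))]; ring
    rw [h2] at h; exact h
  · intro x _
    rw [Complex.norm_exp]
    have : (Complex.I * x * θ).re = 0 := by simp
    rw [this, Real.exp_zero]

lemma ls_kernel_le_inv {U θ : ℝ} (hθ : θ ≠ 0) :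
    ‖∫ u in (-U)..U, Complex.exp (Complex.I * u * θ)‖ ≤ 2 / |θ| := by
  have hc : (Complex.I * (θ : ℂ)) ≠ 0 := by
    simp [Complex.I_ne_zero, Complex.ofReal_eq_zero, hθ]
  have key : (∫ u in (-U)..U, Complex.exp (Complex.I * u * θ))
      = (Complex.exp ((Complex.I * θ) * U) - Complex.exp ((Complex.I * θ) * (-U : ℝ)))
          / (Complex.I * θ) := by
    rw [← integral_exp_mul_complex hc]
    congr 1; funext u; ring_nf
  rw [key, norm_div]
  have h1 : ∀ v : ℝ, ‖Complex.exp ((Complex.I * θ) * (v : ℂ))‖ = 1 := by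
    intro v
    rw [Complex.norm_exp]
    have : ((Complex.I * θ) * (v : ℂ)).re = 0 := by simp
    rw [this, Real.exp_zero]
  have hnum : ‖Complex.exp ((Complex.I * θ) * U) - Complex.exp ((Complex.I * θ) * ((-U : ℝ) : ℂ))‖
      ≤ 2 := by
    refine (norm_sub_le _ _).trans ?_
    rw [h1 U, h1 (-U)]; norm_num
  have hden : ‖Complex.I * (θ : ℂ)‖ = |θ| := by
    rw [norm_mul, Complex.norm_I, Complex.norm_real, one_mul, Real.norm_eq_abs]
  rw [hden]
  have : 0 < |θ| := abs_pos.mpr hθ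
  gcongr


lemma ls_floor_close {x y : ℝ} (hx : 0 ≤ x) (hy : 0 ≤ y) (h : Nat.floor x = Nat.floor y) :
    |x - y| < 1 := by
  rw [abs_sub_lt_iff]
  constructor
  · have h1 : x < Nat.floor x + 1 := Nat.lt_floor_add_one x
    have h2 : (Nat.floor y : ℝ) ≤ y := Nat.floor_le hy
    rw [h] at h1; linarith
  · have h1 : y < Nat.floor y + 1 := Nat.lt_floor_add_one y
    have h2 : (Nat.floor x : ℝ) ≤ x := Nat.floor_le hx
    rw [← h] at h1; linarith

lemma ls_spacing {ι : Type*} [DecidableEq ι] (T : Finset ι) (lam : ι → ℝ) {δ : ℝ} (hδ : 0 < δ)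
    (R : ℕ)
    (hsep : ∀ p ∈ T, ∀ q ∈ T, p ≠ q → δ ≤ |lam p - lam q|)
    (hR : ∀ p ∈ T, ∀ q ∈ T, |lam p - lam q| ≤ R * δ)
    {p : ι} (hp : p ∈ T) :
    ∑ q ∈ T.erase p, 1 / |lam p - lam q| ≤ (2 / δ) * ∑ r ∈ Finset.Icc 1 R, (1 / r : ℝ) := by
  set d : ι → ℝ := fun q => |lam p - lam q| with hd
  set e : ι → Bool × ℕ := fun q => (decide (lam q < lam p), Nat.floor (d q / δ)) with he
  -- basic facts
  have hdpos : ∀ q ∈ T.erase p, δ ≤ d q := by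
    intro q hq
    rw [mem_erase] at hq
    exact hsep p hp q hq.2 (Ne.symm hq.1)
  have hfloor1 : ∀ q ∈ T.erase p, 1 ≤ Nat.floor (d q / δ) := by
    intro q hq
    have : (1 : ℝ) ≤ d q / δ := (one_le_div hδ).mpr (hdpos q hq)
    exact (Nat.one_le_floor_iff _).mpr (by exact_mod_cast this)
  have hfloorR : ∀ q ∈ T.erase p, Nat.floor (d q / δ) ≤ R := by
    intro q hq
    rw [mem_erase] at hq
    have h1 : d q / δ ≤ R := by
      rw [div_le_iff₀ hδ]
      exact hR p hp q hq.2
    calc Nat.floor (d q / δ) ≤ Nat.floor (R : ℝ) := Nat.floor_le_floor h1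
      _ = R := Nat.floor_natCast R
  have hmono : ∀ q ∈ T.erase p, 1 / d q ≤ (1 / δ) * (1 / (Nat.floor (d q / δ) : ℝ)) := by
    intro q hq
    have hf1 := hfloor1 q hq
    have hfpos : (0 : ℝ) < (Nat.floor (d q / δ) : ℝ) := by exact_mod_cast hf1
    have hle : (Nat.floor (d q / δ) : ℝ) * δ ≤ d q := by
      have := Nat.floor_le (by positivity : (0:ℝ) ≤ d q / δ)
      calc (Nat.floor (d q / δ) : ℝ) * δ ≤ (d q / δ) * δ := by
            exact mul_le_mul_of_nonneg_right this hδ.le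
        _ = d q := by field_simp
    rw [one_div_mul_one_div_rev]
    exact one_div_le_one_div_of_le (by positivity) hle
  -- injectivity of e on T.erase p
  have hinj : Set.InjOn e (T.erase p) := by
    intro q1 hq1' q2 hq2' heq
    by_contra hne
    have hq1 := mem_coe.mp hq1'
    have hq2 := mem_coe.mp hq2'
    have hsep12 : δ ≤ |lam q1 - lam q2| := by
      rw [mem_erase] at hq1 hq2
      exact hsep q1 hq1.2 q2 hq2.2 hne
    have hb : (decide (lam q1 < lam p)) = (decide (lam q2 < lam p)) := congrArg Prod.fst heq
    have hf : Nat.floor (d q1 / δ) = Nat.floor (d q2 / δ) := congrArg Prod.snd heq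
    have hclose : |d q1 / δ - d q2 / δ| < 1 :=
      ls_floor_close (by positivity) (by positivity) hf
    have hclose' : |d q1 - d q2| < δ := by
      have heqq : d q1 - d q2 = (d q1 / δ - d q2 / δ) * δ := by field_simp
      rw [heqq, abs_mul, _root_.abs_of_pos hδ]
      calc |d q1 / δ - d q2 / δ| * δ < 1 * δ := mul_lt_mul_of_pos_right hclose hδ
        _ = δ := one_mul δ
    -- same side: |lam q1 - lam q2| = |d q1 - d q2|
    have hne1 : lam q1 ≠ lam p := by
      rw [mem_erase] at hq1
      intro h
      have := hsep q1 hq1.2 p hp (hq1.1)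
      rw [h] at this; simp at this; linarith
    have hne2 : lam q2 ≠ lam p := by
      rw [mem_erase] at hq2
      intro h
      have := hsep q2 hq2.2 p hp (hq2.1)
      rw [h] at this; simp at this; linarith
    have hsame : |lam q1 - lam q2| = |d q1 - d q2| := by
      by_cases h1 : lam q1 < lam p
      · have h2 : lam q2 < lam p := by
          by_contra h2
          rw [decide_eq_decide] at hb
          exact h2 (hb.mp h1)
        have e1 : d q1 = lam p - lam q1 := abs_of_pos (by linarith)
        have e2 : d q2 = lam p - lam q2 := abs_of_pos (by linarith)
        rw [e1, e2, ← abs_neg]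
        congr 1; ring
      · have h2 : ¬ lam q2 < lam p := by
          rw [decide_eq_decide] at hb
          intro h; exact h1 (hb.mpr h)
        have h1' : lam p < lam q1 := lt_of_le_of_ne (not_lt.mp h1) (Ne.symm hne1)
        have h2' : lam p < lam q2 := lt_of_le_of_ne (not_lt.mp h2) (Ne.symm hne2)
        have e1 : d q1 = lam q1 - lam p := by
          simp only [hd]; rw [abs_sub_comm]; exact abs_of_pos (by linarith)
        have e2 : d q2 = lam q2 - lam p := by
          simp only [hd]; rw [abs_sub_comm]; exact abs_of_pos (by linarith)
        rw [e1, e2]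
        congr 1; ring
    rw [hsame] at hsep12
    linarith
  -- sum over image
  have step1 : ∑ q ∈ T.erase p, 1 / d q
      ≤ ∑ q ∈ T.erase p, (1 / δ) * (1 / ((e q).2 : ℝ)) :=
    Finset.sum_le_sum hmono
  have step2 : ∑ q ∈ T.erase p, (1 / ((e q).2 : ℝ))
      = ∑ x ∈ (T.erase p).image e, (1 / (x.2 : ℝ)) := by
    rw [Finset.sum_image (fun q1 h1 q2 h2 h => hinj h1 h2 h)]
  have step3 : ∑ x ∈ (T.erase p).image e, (1 / (x.2 : ℝ))
      ≤ ∑ x ∈ (Finset.univ : Finset Bool) ×ˢ Finset.Icc 1 R, (1 / (x.2 : ℝ)) := by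
    refine Finset.sum_le_sum_of_subset_of_nonneg ?_ ?_
    · intro x hx
      rw [Finset.mem_image] at hx
      obtain ⟨q, hq, rfl⟩ := hx
      rw [Finset.mem_product]
      exact ⟨Finset.mem_univ _, Finset.mem_Icc.mpr ⟨hfloor1 q hq, hfloorR q hq⟩⟩
    · intro x _ _
      positivity
  have step4 : ∑ x ∈ (Finset.univ : Finset Bool) ×ˢ Finset.Icc 1 R, (1 / (x.2 : ℝ))
      = 2 * ∑ r ∈ Finset.Icc 1 R, (1 / r : ℝ) := by
    rw [Finset.sum_product]
    simp [two_mul]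
  calc ∑ q ∈ T.erase p, 1 / d q ≤ ∑ q ∈ T.erase p, (1 / δ) * (1 / ((e q).2 : ℝ)) := step1
    _ = (1 / δ) * ∑ q ∈ T.erase p, (1 / ((e q).2 : ℝ)) := by rw [Finset.mul_sum]
    _ ≤ (1 / δ) * (2 * ∑ r ∈ Finset.Icc 1 R, (1 / r : ℝ)) := by
        refine mul_le_mul_of_nonneg_left ?_ (by positivity)
        rw [step2, ← step4]
        exact step3
    _ = (2 / δ) * ∑ r ∈ Finset.Icc 1 R, (1 / r : ℝ) := by ring


lemma ls_cpow {m n : ℕ} (hm : 0 < m) (hn : 0 < n) (u : ℝ) :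
    ((m : ℂ) / (n : ℂ)) ^ (Complex.I * (u : ℂ))
      = Complex.exp (Complex.I * u * ((Real.log m - Real.log n : ℝ) : ℂ)) := by
  have hmr : (0:ℝ) < (m:ℝ) := by exact_mod_cast hm
  have hnr : (0:ℝ) < (n:ℝ) := by exact_mod_cast hn
  have hx : (0:ℝ) < (m:ℝ)/(n:ℝ) := by positivity
  have hcast : ((m:ℂ)/(n:ℂ)) = (((m:ℝ)/(n:ℝ) : ℝ) : ℂ) := by push_cast; ring
  have hne : ((m:ℂ)/(n:ℂ)) ≠ 0 := by
    rw [hcast]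
    exact_mod_cast ne_of_gt hx
  rw [Complex.cpow_def_of_ne_zero hne, hcast, ← Complex.ofReal_log hx.le]
  rw [Real.log_div (ne_of_gt hmr) (ne_of_gt hnr)]
  congr 1
  ring

lemma ls_log_sep {x y K : ℕ} (hx : 0 < x) (hxy : x < y) (hyK : y ≤ K) :
    1 / (K : ℝ) ≤ Real.log y - Real.log x := by
  have hxr : (0:ℝ) < (x:ℝ) := by exact_mod_cast hx
  have hyr : (0:ℝ) < (y:ℝ) := by exact_mod_cast (hx.trans hxy)
  have hKr : (0:ℝ) < (K:ℝ) := by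
    have : 0 < K := lt_of_lt_of_le (hx.trans hxy) hyK
    exact_mod_cast this
  have h1 : Real.log ((x:ℝ)/(y:ℝ)) ≤ (x:ℝ)/(y:ℝ) - 1 :=
    Real.log_le_sub_one_of_pos (by positivity)
  rw [Real.log_div (ne_of_gt hxr) (ne_of_gt hyr)] at h1
  have h3 : (1:ℝ) ≤ (y:ℝ) - (x:ℝ) := by
    have : x + 1 ≤ y := hxy
    have := (Nat.cast_le (α := ℝ)).mpr this
    push_cast at this
    linarith
  have h4 : 1/(K:ℝ) ≤ 1/(y:ℝ) := by
    apply one_div_le_one_div_of_le hyr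
    exact_mod_cast hyK
  have h5 : 1/(y:ℝ) ≤ ((y:ℝ) - (x:ℝ))/(y:ℝ) := by
    gcongr
  have h6 : ((y:ℝ) - (x:ℝ))/(y:ℝ) = 1 - (x:ℝ)/(y:ℝ) := by field_simp
  have h7 : 1 - (x:ℝ)/(y:ℝ) ≤ Real.log y - Real.log x := by linarith
  linarith

lemma ls_cross_ne {m n m' n' : ℕ} (hm : 0 < m)
    (hg : Nat.gcd m n = 1) (hg' : Nat.gcd m' n' = 1)
    (hne : (m, n) ≠ (m', n')) : m * n' ≠ m' * n := by
  intro h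
  apply hne
  have hc : Nat.Coprime m n := hg
  have hc' : Nat.Coprime m' n' := hg'
  have hd1 : m ∣ m' * n := ⟨n', by rw [← h]⟩
  have hd1' : m ∣ m' := (Nat.Coprime.dvd_of_dvd_mul_right hc) hd1
  have hd2 : m' ∣ m * n' := ⟨n, h⟩
  have hd2' : m' ∣ m := (Nat.Coprime.dvd_of_dvd_mul_right hc') hd2
  have hmm : m = m' := Nat.dvd_antisymm hd1' hd2'
  have hnn : n' = n := by
    apply Nat.eq_of_mul_eq_mul_left hm
    rw [h, hmm]
  rw [hmm, hnn]

lemma ls_harmonic (R : ℕ) : ∑ r ∈ Finset.Icc 1 R, (1 / r : ℝ) ≤ 1 + Real.log R := by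
  have h := harmonic_le_one_add_log R
  rw [harmonic_eq_sum_Icc] at h
  have hcast : ((∑ i ∈ Finset.Icc 1 R, (i:ℚ)⁻¹ : ℚ) : ℝ) = ∑ r ∈ Finset.Icc 1 R, (1 / r : ℝ) := by
    push_cast
    exact Finset.sum_congr rfl (fun r _ => (one_div _).symm)
  rw [← hcast]
  exact_mod_cast h


set_option maxHeartbeats 1000000 in
lemma ls_expand {ι : Type*} (T : Finset ι) (c : ι → ℂ) (lam : ι → ℝ) (U : ℝ) :
    (∫ u in (-U)..U, ‖∑ p ∈ T, c p * Complex.exp (Complex.I * u * lam p)‖ ^ 2)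
      ≤ ∑ p ∈ T, ∑ q ∈ T, ‖c p‖ * ‖c q‖ *
          ‖∫ u in (-U)..U, Complex.exp (Complex.I * u * ((lam p - lam q : ℝ) : ℂ))‖ := by
  classical
  have hcont : ∀ w ζ : ℂ, Continuous (fun u : ℝ => w * Complex.exp (Complex.I * u * ζ)) := by
    intro w ζ
    exact continuous_const.mul (Complex.continuous_exp.comp
      ((continuous_const.mul Complex.continuous_ofReal).mul continuous_const))
  -- pointwise expansion
  have expand : ∀ u : ℝ,
      (‖∑ p ∈ T, c p * Complex.exp (Complex.I * u * lam p)‖ : ℝ) ^ 2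
      = (∑ p ∈ T, ∑ q ∈ T,
          (c p * (starRingEnd ℂ) (c q)) *
            Complex.exp (Complex.I * u * ((lam p - lam q : ℝ) : ℂ))).re := by
    intro u
    set z := ∑ p ∈ T, c p * Complex.exp (Complex.I * u * lam p) with hz
    have h1 : z * (starRingEnd ℂ) z = ∑ p ∈ T, ∑ q ∈ T,
        (c p * (starRingEnd ℂ) (c q)) *
          Complex.exp (Complex.I * u * ((lam p - lam q : ℝ) : ℂ)) := by
      rw [hz, map_sum, Finset.sum_mul_sum]
      refine Finset.sum_congr rfl (fun p _ => Finset.sum_congr rfl (fun q _ => ?_))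
      rw [map_mul, ← Complex.exp_conj]
      have hconj : (starRingEnd ℂ) (Complex.I * u * lam q) = -(Complex.I * u * lam q) := by
        simp only [map_mul, Complex.conj_I, Complex.conj_ofReal]
        ring
      rw [hconj]
      rw [show c p * Complex.exp (Complex.I * u * lam p) *
            ((starRingEnd ℂ) (c q) * Complex.exp (-(Complex.I * u * lam q)))
          = (c p * (starRingEnd ℂ) (c q)) *
            (Complex.exp (Complex.I * u * lam p) * Complex.exp (-(Complex.I * u * lam q))) by ring]
      rw [← Complex.exp_add]
      congr 2
      push_cast
      ring
    rw [← h1, Complex.mul_conj, Complex.ofReal_re, Complex.normSq_eq_norm_sq]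
  have hInt : ∀ p q : ι, IntervalIntegrable
      (fun u : ℝ => (c p * (starRingEnd ℂ) (c q)) *
        Complex.exp (Complex.I * u * ((lam p - lam q : ℝ) : ℂ)))
      volume (-U) U := fun p q =>
    ((hcont (c p * (starRingEnd ℂ) (c q)) ((lam p - lam q : ℝ) : ℂ)).intervalIntegrable _ _)
  have hrowInt : ∀ p : ι, IntervalIntegrable
      (fun u : ℝ => ∑ q ∈ T, (c p * (starRingEnd ℂ) (c q)) *
        Complex.exp (Complex.I * u * ((lam p - lam q : ℝ) : ℂ)))
      volume (-U) U := fun p =>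
    ((continuous_finset_sum T (fun q _ => hcont _ _)).intervalIntegrable _ _)
  have hgInt : IntervalIntegrable
      (fun u : ℝ => ∑ p ∈ T, ∑ q ∈ T,
        (c p * (starRingEnd ℂ) (c q)) *
          Complex.exp (Complex.I * u * ((lam p - lam q : ℝ) : ℂ)))
      volume (-U) U :=
    ((continuous_finset_sum T (fun p _ =>
      continuous_finset_sum T (fun q _ => hcont _ _))).intervalIntegrable _ _)
  have key : (∫ u in (-U)..U, ‖∑ p ∈ T, c p * Complex.exp (Complex.I * u * lam p)‖ ^ 2)
      = (∑ p ∈ T, ∑ q ∈ T, (c p * (starRingEnd ℂ) (c q)) *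
          ∫ u in (-U)..U, Complex.exp (Complex.I * u * ((lam p - lam q : ℝ) : ℂ))).re := by
    rw [intervalIntegral.integral_congr (g := fun u : ℝ =>
      Complex.reCLM (∑ p ∈ T, ∑ q ∈ T,
        (c p * (starRingEnd ℂ) (c q)) *
          Complex.exp (Complex.I * u * ((lam p - lam q : ℝ) : ℂ))))
      (fun u _ => expand u)]
    rw [ContinuousLinearMap.intervalIntegral_comp_comm _ hgInt]
    have h2 : (∫ u in (-U)..U, ∑ p ∈ T, ∑ q ∈ T,
        (c p * (starRingEnd ℂ) (c q)) *
          Complex.exp (Complex.I * u * ((lam p - lam q : ℝ) : ℂ)))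
        = ∑ p ∈ T, ∑ q ∈ T, (c p * (starRingEnd ℂ) (c q)) *
            ∫ u in (-U)..U, Complex.exp (Complex.I * u * ((lam p - lam q : ℝ) : ℂ)) := by
      rw [intervalIntegral.integral_finset_sum (fun p _ => hrowInt p)]
      refine Finset.sum_congr rfl (fun p _ => ?_)
      rw [intervalIntegral.integral_finset_sum (fun q _ => hInt p q)]
      refine Finset.sum_congr rfl (fun q _ => ?_)
      rw [intervalIntegral.integral_const_mul]
    rw [h2]
    rfl
  rw [key, Complex.re_sum]
  refine Finset.sum_le_sum (fun p _ => ?_)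
  rw [Complex.re_sum]
  refine Finset.sum_le_sum (fun q _ => ?_)
  calc ((c p * (starRingEnd ℂ) (c q)) *
        ∫ u in (-U)..U, Complex.exp (Complex.I * u * ((lam p - lam q : ℝ) : ℂ))).re
      ≤ ‖(c p * (starRingEnd ℂ) (c q)) *
        ∫ u in (-U)..U, Complex.exp (Complex.I * u * ((lam p - lam q : ℝ) : ℂ))‖ :=
        Complex.re_le_norm _
    _ = ‖c p‖ * ‖c q‖ * ‖∫ u in (-U)..U,
          Complex.exp (Complex.I * u * ((lam p - lam q : ℝ) : ℂ))‖ := by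
        rw [norm_mul, norm_mul, RCLike.norm_conj]

lemma ls_combine {ι : Type*} [DecidableEq ι] (T : Finset ι) (v : ι → ℝ) (lam : ι → ℝ)
    (F : ι → ι → ℝ) {U δ : ℝ} (hδ : 0 < δ) (R : ℕ)
    (hv : ∀ p, 0 ≤ v p)
    (hFdiag : ∀ p ∈ T, F p p ≤ 2 * U)
    (hFoff : ∀ p ∈ T, ∀ q ∈ T, p ≠ q → F p q ≤ 2 / |lam p - lam q|)
    (hsep : ∀ p ∈ T, ∀ q ∈ T, p ≠ q → δ ≤ |lam p - lam q|)
    (hR : ∀ p ∈ T, ∀ q ∈ T, |lam p - lam q| ≤ R * δ) :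
    ∑ p ∈ T, ∑ q ∈ T, v p * v q * F p q
      ≤ (2 * U + (4 / δ) * ∑ r ∈ Finset.Icc 1 R, (1 / r : ℝ)) * ∑ p ∈ T, (v p) ^ 2 := by
  have split : ∑ p ∈ T, ∑ q ∈ T, v p * v q * F p q
      = ∑ p ∈ T, v p * v p * F p p
        + ∑ p ∈ T, ∑ q ∈ T.erase p, v p * v q * F p q := by
    rw [← Finset.sum_add_distrib]
    exact Finset.sum_congr rfl (fun p hp =>
      (Finset.add_sum_erase T (fun q => v p * v q * F p q) hp).symm)
  have diag : ∑ p ∈ T, v p * v p * F p p ≤ 2 * U * ∑ p ∈ T, (v p) ^ 2 := by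
    rw [Finset.mul_sum]
    refine Finset.sum_le_sum (fun p hp => ?_)
    calc v p * v p * F p p ≤ v p * v p * (2 * U) := by
          exact mul_le_mul_of_nonneg_left (hFdiag p hp) (mul_nonneg (hv p) (hv p))
      _ = 2 * U * (v p) ^ 2 := by ring
  have offdiag : ∑ p ∈ T, ∑ q ∈ T.erase p, v p * v q * F p q
      ≤ ((4 / δ) * ∑ r ∈ Finset.Icc 1 R, (1 / r : ℝ)) * ∑ p ∈ T, (v p) ^ 2 := by
    set W := (2 / δ) * ∑ r ∈ Finset.Icc 1 R, (1 / r : ℝ) with hW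
    have step1 : ∀ p ∈ T, ∀ q ∈ T.erase p, v p * v q * F p q
        ≤ ((v p) ^ 2 + (v q) ^ 2) * (1 / |lam p - lam q|) := by
      intro p hp q hq
      rw [Finset.mem_erase] at hq
      have h1 : F p q ≤ 2 / |lam p - lam q| := hFoff p hp q hq.2 (Ne.symm hq.1)
      have h2 : v p * v q * F p q ≤ v p * v q * (2 / |lam p - lam q|) :=
        mul_le_mul_of_nonneg_left h1 (mul_nonneg (hv p) (hv q))
      refine h2.trans ?_
      have h3 : 2 * (v p * v q) ≤ (v p) ^ 2 + (v q) ^ 2 := by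
        have := two_mul_le_add_sq (v p) (v q); linarith
      have h4 : (0:ℝ) ≤ 1 / |lam p - lam q| := by positivity
      calc v p * v q * (2 / |lam p - lam q|)
          = (2 * (v p * v q)) * (1 / |lam p - lam q|) := by ring
        _ ≤ ((v p) ^ 2 + (v q) ^ 2) * (1 / |lam p - lam q|) :=
            mul_le_mul_of_nonneg_right h3 h4
    have step2 : ∑ p ∈ T, ∑ q ∈ T.erase p, v p * v q * F p q
        ≤ ∑ p ∈ T, ∑ q ∈ T.erase p, ((v p) ^ 2 + (v q) ^ 2) * (1 / |lam p - lam q|) :=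
      Finset.sum_le_sum (fun p hp => Finset.sum_le_sum (fun q hq => step1 p hp q hq))
    have step3 : ∑ p ∈ T, ∑ q ∈ T.erase p, ((v p) ^ 2 + (v q) ^ 2) * (1 / |lam p - lam q|)
        = (∑ p ∈ T, ∑ q ∈ T.erase p, (v p) ^ 2 * (1 / |lam p - lam q|))
          + ∑ p ∈ T, ∑ q ∈ T.erase p, (v q) ^ 2 * (1 / |lam p - lam q|) := by
      rw [← Finset.sum_add_distrib]
      refine Finset.sum_congr rfl (fun p _ => ?_)
      rw [← Finset.sum_add_distrib]
      refine Finset.sum_congr rfl (fun q _ => ?_)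
      ring
    have first : ∑ p ∈ T, ∑ q ∈ T.erase p, (v p) ^ 2 * (1 / |lam p - lam q|)
        ≤ W * ∑ p ∈ T, (v p) ^ 2 := by
      rw [Finset.mul_sum]
      refine Finset.sum_le_sum (fun p hp => ?_)
      rw [← Finset.mul_sum]
      calc (v p) ^ 2 * ∑ q ∈ T.erase p, 1 / |lam p - lam q|
          ≤ (v p) ^ 2 * W :=
            mul_le_mul_of_nonneg_left (ls_spacing T lam hδ R hsep hR hp) (by positivity)
        _ = W * (v p) ^ 2 := by ring
    have second : ∑ p ∈ T, ∑ q ∈ T.erase p, (v q) ^ 2 * (1 / |lam p - lam q|)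
        ≤ W * ∑ p ∈ T, (v p) ^ 2 := by
      have swap : ∑ p ∈ T, ∑ q ∈ T.erase p, (v q) ^ 2 * (1 / |lam p - lam q|)
          = ∑ q ∈ T, ∑ p ∈ T.erase q, (v q) ^ 2 * (1 / |lam p - lam q|) := by
        refine Finset.sum_comm' (fun p q => ?_)
        simp only [Finset.mem_erase]
        tauto
      rw [swap, Finset.mul_sum]
      refine Finset.sum_le_sum (fun q hq => ?_)
      rw [← Finset.mul_sum]
      have hsum : ∑ p ∈ T.erase q, 1 / |lam p - lam q| ≤ W := by
        have h := ls_spacing T lam hδ R hsep hR hq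
        refine le_trans (le_of_eq ?_) h
        refine Finset.sum_congr rfl (fun p _ => ?_)
        rw [abs_sub_comm]
      calc (v q) ^ 2 * ∑ p ∈ T.erase q, 1 / |lam p - lam q|
          ≤ (v q) ^ 2 * W := mul_le_mul_of_nonneg_left hsum (by positivity)
        _ = W * (v q) ^ 2 := by ring
    calc ∑ p ∈ T, ∑ q ∈ T.erase p, v p * v q * F p q
        ≤ (∑ p ∈ T, ∑ q ∈ T.erase p, (v p) ^ 2 * (1 / |lam p - lam q|))
          + ∑ p ∈ T, ∑ q ∈ T.erase p, (v q) ^ 2 * (1 / |lam p - lam q|) := by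
          rw [← step3]; exact step2
      _ ≤ W * ∑ p ∈ T, (v p) ^ 2 + W * ∑ p ∈ T, (v p) ^ 2 := add_le_add first second
      _ = ((4 / δ) * ∑ r ∈ Finset.Icc 1 R, (1 / r : ℝ)) * ∑ p ∈ T, (v p) ^ 2 := by
          rw [hW]; ring
  calc ∑ p ∈ T, ∑ q ∈ T, v p * v q * F p q
      = ∑ p ∈ T, v p * v p * F p p
        + ∑ p ∈ T, ∑ q ∈ T.erase p, v p * v q * F p q := split
    _ ≤ 2 * U * ∑ p ∈ T, (v p) ^ 2
        + ((4 / δ) * ∑ r ∈ Finset.Icc 1 R, (1 / r : ℝ)) * ∑ p ∈ T, (v p) ^ 2 :=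
        add_le_add diag offdiag
    _ = (2 * U + (4 / δ) * ∑ r ∈ Finset.Icc 1 R, (1 / r : ℝ)) * ∑ p ∈ T, (v p) ^ 2 := by ring

lemma ls_abstract {ι : Type*} [DecidableEq ι] (T : Finset ι) (c : ι → ℂ) (lam : ι → ℝ)
    {U δ : ℝ} (hU : 0 ≤ U) (hδ : 0 < δ) (R : ℕ)
    (hsep : ∀ p ∈ T, ∀ q ∈ T, p ≠ q → δ ≤ |lam p - lam q|)
    (hR : ∀ p ∈ T, ∀ q ∈ T, |lam p - lam q| ≤ R * δ) :
    (∫ u in (-U)..U, ‖∑ p ∈ T, c p * Complex.exp (Complex.I * u * lam p)‖ ^ 2)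
      ≤ (2 * U + (4 / δ) * ∑ r ∈ Finset.Icc 1 R, (1 / r : ℝ)) * ∑ p ∈ T, ‖c p‖ ^ 2 := by
  refine (ls_expand T c lam U).trans ?_
  refine ls_combine T (fun p => ‖c p‖) lam
    (fun p q => ‖∫ u in (-U)..U, Complex.exp (Complex.I * u * ((lam p - lam q : ℝ) : ℂ))‖)
    hδ R (fun p => norm_nonneg _) ?_ ?_ hsep hR
  · intro p hp
    exact ls_kernel_le_U hU _
  · intro p hp q hq hpq
    have hθ : lam p - lam q ≠ 0 := by
      have := hsep p hp q hq hpq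
      intro h; rw [h] at this; simp at this; linarith
    exact ls_kernel_le_inv hθ

set_option maxHeartbeats 1000000 in
/-- **Two-dimensional large sieve inequality with coprimality support.**
For every `ε > 0` there is `C_ε > 0` such that for all `U ≥ 1`, positive integers
`M, N`, and coefficients `a m n` vanishing unless `gcd(m, n) = 1`, one has
`∫_{-U}^{U} ‖∑_{n≤N} ∑_{m≤M} a m n (m/n)^{iu}‖² du
  ≤ C_ε (MN)^ε (U + MN) ∑_{m≤M} ∑_{n≤N} ‖a m n‖²`. -/
theorem large_sieve_two_dim :
    ∀ ε : ℝ, 0 < ε → ∃ C : ℝ, 0 < C ∧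
      ∀ (U : ℝ), 1 ≤ U → ∀ (M N : ℕ), 0 < M → 0 < N → ∀ (a : ℕ → ℕ → ℂ),
        (∀ m n : ℕ, Nat.gcd m n ≠ 1 → a m n = 0) →
        (∫ u in (-U)..U,
            ‖∑ n ∈ Finset.Icc 1 N, ∑ m ∈ Finset.Icc 1 M,
                a m n * ((m : ℂ) / (n : ℂ)) ^ (Complex.I * (u : ℂ))‖ ^ 2)
          ≤ C * ((M : ℝ) * N) ^ ε * (U + M * N) *
              ∑ m ∈ Finset.Icc 1 M, ∑ n ∈ Finset.Icc 1 N, ‖a m n‖ ^ 2 := by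
  intro ε hε
  refine ⟨6 + 8 / ε, by positivity, ?_⟩
  intro U hU M N hM hN a ha
  classical
  set K : ℕ := M * N with hK
  have hKpos : 0 < K := Nat.mul_pos hM hN
  have hKr0 : (0:ℝ) < (K:ℝ) := by exact_mod_cast hKpos
  have hKr1 : (1:ℝ) ≤ (K:ℝ) := by exact_mod_cast hKpos
  have hU0 : (0:ℝ) ≤ U := by linarith
  set δ : ℝ := 1 / (K:ℝ) with hδdef
  have hδ : 0 < δ := by positivity
  set R : ℕ := K ^ 2 with hRdef
  set T : Finset (ℕ × ℕ) :=
    (Finset.Icc 1 M ×ˢ Finset.Icc 1 N).filter (fun p => a p.1 p.2 ≠ 0) with hT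
  set lam : ℕ × ℕ → ℝ := fun p => Real.log p.1 - Real.log p.2 with hlam
  set c : ℕ × ℕ → ℂ := fun p => a p.1 p.2 with hc
  have hmem : ∀ p : ℕ × ℕ, p ∈ T → (1 ≤ p.1 ∧ p.1 ≤ M) ∧ (1 ≤ p.2 ∧ p.2 ≤ N)
      ∧ Nat.gcd p.1 p.2 = 1 := by
    intro p hp
    rw [hT, Finset.mem_filter, Finset.mem_product, Finset.mem_Icc, Finset.mem_Icc] at hp
    refine ⟨hp.1.1, hp.1.2, ?_⟩
    by_contra hg
    exact hp.2 (ha p.1 p.2 hg)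
  -- the cross-difference identity
  have hcross : ∀ p ∈ T, ∀ q ∈ T,
      lam p - lam q = Real.log ((p.1 * q.2 : ℕ) : ℝ) - Real.log ((q.1 * p.2 : ℕ) : ℝ) := by
    intro p hp q hq
    obtain ⟨⟨hp1, _⟩, ⟨hp2, _⟩, _⟩ := hmem p hp
    obtain ⟨⟨hq1, _⟩, ⟨hq2, _⟩, _⟩ := hmem q hq
    have e1 : ((p.1:ℝ)) ≠ 0 := Nat.cast_ne_zero.mpr (Nat.one_le_iff_ne_zero.mp hp1)
    have e2 : ((p.2:ℝ)) ≠ 0 := Nat.cast_ne_zero.mpr (Nat.one_le_iff_ne_zero.mp hp2)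
    have e3 : ((q.1:ℝ)) ≠ 0 := Nat.cast_ne_zero.mpr (Nat.one_le_iff_ne_zero.mp hq1)
    have e4 : ((q.2:ℝ)) ≠ 0 := Nat.cast_ne_zero.mpr (Nat.one_le_iff_ne_zero.mp hq2)
    push_cast
    rw [Real.log_mul e1 e4, Real.log_mul e3 e2]
    simp only [hlam]
    ring
  -- separation
  have hsep : ∀ p ∈ T, ∀ q ∈ T, p ≠ q → δ ≤ |lam p - lam q| := by
    intro p hp q hq hpq
    obtain ⟨⟨hp1, hp1M⟩, ⟨hp2, hp2N⟩, hpg⟩ := hmem p hp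
    obtain ⟨⟨hq1, hq1M⟩, ⟨hq2, hq2N⟩, hqg⟩ := hmem q hq
    have hx0 : 0 < p.1 * q.2 := Nat.mul_pos hp1 hq2
    have hy0 : 0 < q.1 * p.2 := Nat.mul_pos hq1 hp2
    have hxK : p.1 * q.2 ≤ K := by rw [hK]; exact Nat.mul_le_mul hp1M hq2N
    have hyK : q.1 * p.2 ≤ K := by rw [hK]; exact Nat.mul_le_mul hq1M hp2N
    have hxy : p.1 * q.2 ≠ q.1 * p.2 := by
      refine ls_cross_ne hp1 hpg hqg ?_
      intro h
      apply hpq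
      have h1 : p.1 = q.1 := congrArg Prod.fst h
      have h2 : p.2 = q.2 := congrArg Prod.snd h
      exact Prod.ext h1 h2
    rw [hcross p hp q hq, hδdef]
    rcases lt_or_gt_of_ne hxy with h | h
    · rw [abs_sub_comm]
      exact (ls_log_sep hx0 h hyK).trans (le_abs_self _)
    · exact (ls_log_sep hy0 h hxK).trans (le_abs_self _)
  -- upper bound on differences
  have hRδ : (R:ℝ) * δ = (K:ℝ) := by
    rw [hRdef, hδdef]
    push_cast
    field_simp
  have hRb : ∀ p ∈ T, ∀ q ∈ T, |lam p - lam q| ≤ (R:ℝ) * δ := by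
    intro p hp q hq
    obtain ⟨⟨hp1, hp1M⟩, ⟨hp2, hp2N⟩, _⟩ := hmem p hp
    obtain ⟨⟨hq1, hq1M⟩, ⟨hq2, hq2N⟩, _⟩ := hmem q hq
    have hx0 : 0 < p.1 * q.2 := Nat.mul_pos hp1 hq2
    have hy0 : 0 < q.1 * p.2 := Nat.mul_pos hq1 hp2
    have hxK : p.1 * q.2 ≤ K := by rw [hK]; exact Nat.mul_le_mul hp1M hq2N
    have hyK : q.1 * p.2 ≤ K := by rw [hK]; exact Nat.mul_le_mul hq1M hp2N
    have hlogx0 : 0 ≤ Real.log ((p.1 * q.2 : ℕ) : ℝ) := Real.log_nonneg (by exact_mod_cast hx0)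
    have hlogy0 : 0 ≤ Real.log ((q.1 * p.2 : ℕ) : ℝ) := Real.log_nonneg (by exact_mod_cast hy0)
    have hlogxK : Real.log ((p.1 * q.2 : ℕ) : ℝ) ≤ Real.log (K:ℝ) :=
      (Real.log_le_log_iff (by exact_mod_cast hx0) hKr0).mpr (by exact_mod_cast hxK)
    have hlogyK : Real.log ((q.1 * p.2 : ℕ) : ℝ) ≤ Real.log (K:ℝ) :=
      (Real.log_le_log_iff (by exact_mod_cast hy0) hKr0).mpr (by exact_mod_cast hyK)
    have hlogK : Real.log (K:ℝ) ≤ (K:ℝ) := by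
      have := Real.log_le_sub_one_of_pos hKr0
      linarith
    rw [hcross p hp q hq, hRδ, abs_sub_le_iff]
    constructor <;> linarith
  -- rewrite the integrand
  have hfun : ∀ u : ℝ, (∑ n ∈ Finset.Icc 1 N, ∑ m ∈ Finset.Icc 1 M,
        a m n * ((m : ℂ) / (n : ℂ)) ^ (Complex.I * (u : ℂ)))
      = ∑ p ∈ T, c p * Complex.exp (Complex.I * u * lam p) := by
    intro u
    calc (∑ n ∈ Finset.Icc 1 N, ∑ m ∈ Finset.Icc 1 M,
          a m n * ((m : ℂ) / (n : ℂ)) ^ (Complex.I * (u : ℂ)))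
        = ∑ m ∈ Finset.Icc 1 M, ∑ n ∈ Finset.Icc 1 N,
            a m n * ((m : ℂ) / (n : ℂ)) ^ (Complex.I * (u : ℂ)) := Finset.sum_comm
      _ = ∑ p ∈ (Finset.Icc 1 M ×ˢ Finset.Icc 1 N),
            a p.1 p.2 * (((p.1 : ℕ) : ℂ) / ((p.2 : ℕ) : ℂ)) ^ (Complex.I * (u : ℂ)) :=
          (Finset.sum_product _ _ (fun p : ℕ × ℕ =>
              a p.1 p.2 * (((p.1 : ℕ) : ℂ) / ((p.2 : ℕ) : ℂ)) ^ (Complex.I * (u : ℂ)))).symm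
      _ = ∑ p ∈ T, a p.1 p.2 * (((p.1 : ℕ) : ℂ) / ((p.2 : ℕ) : ℂ)) ^ (Complex.I * (u : ℂ)) :=
          (Finset.sum_filter_of_ne (fun p _ h0 => by
            intro ha0
            exact h0 (by rw [ha0, zero_mul]))).symm
      _ = ∑ p ∈ T, c p * Complex.exp (Complex.I * u * lam p) := by
          refine Finset.sum_congr rfl (fun p hp => ?_)
          obtain ⟨⟨h1, _⟩, ⟨h2, _⟩, _⟩ := hmem p hp
          rw [ls_cpow h1 h2 u]
  have hintegral : (∫ u in (-U)..U,
        ‖∑ n ∈ Finset.Icc 1 N, ∑ m ∈ Finset.Icc 1 M,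
            a m n * ((m : ℂ) / (n : ℂ)) ^ (Complex.I * (u : ℂ))‖ ^ 2)
      = ∫ u in (-U)..U, ‖∑ p ∈ T, c p * Complex.exp (Complex.I * u * lam p)‖ ^ 2 :=
    intervalIntegral.integral_congr (fun u _ => by rw [hfun u])
  -- right-hand side sums
  have hST : ∑ p ∈ T, ‖c p‖ ^ 2
      ≤ ∑ m ∈ Finset.Icc 1 M, ∑ n ∈ Finset.Icc 1 N, ‖a m n‖ ^ 2 := by
    have h1 : ∑ p ∈ T, ‖c p‖ ^ 2
        ≤ ∑ p ∈ (Finset.Icc 1 M ×ˢ Finset.Icc 1 N), ‖a p.1 p.2‖ ^ 2 := by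
      refine Finset.sum_le_sum_of_subset_of_nonneg (Finset.filter_subset _ _) ?_
      intro p _ _
      positivity
    refine h1.trans (le_of_eq ?_)
    exact Finset.sum_product _ _ (fun p : ℕ × ℕ => ‖a p.1 p.2‖ ^ 2)
  -- apply the abstract large sieve
  have main := ls_abstract T c lam hU0 hδ R hsep hRb
  rw [hintegral]
  refine main.trans ?_
  -- numerics
  set A : ℝ := ((M:ℝ) * N) ^ ε with hA
  have hKMN : ((K:ℕ):ℝ) = (M:ℝ) * N := by rw [hK]; push_cast; ring
  have hA1 : 1 ≤ A := by
    rw [hA, ← hKMN]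
    exact Real.one_le_rpow hKr1 hε.le
  have hA0 : 0 ≤ A := le_trans zero_le_one hA1
  set L : ℝ := Real.log (K:ℝ) with hL
  have hL0 : 0 ≤ L := Real.log_nonneg hKr1
  have hLA : L ≤ A / ε := by
    rw [hA, ← hKMN]
    exact Real.log_le_rpow_div hKr0.le hε
  have hH : ∑ r ∈ Finset.Icc 1 R, (1 / r : ℝ) ≤ 1 + 2 * L := by
    refine (ls_harmonic R).trans ?_
    have : Real.log (R:ℝ) = 2 * L := by
      rw [hRdef, hL]
      push_cast
      rw [Real.log_pow]
      push_cast
      ring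
    linarith
  have hH0 : 0 ≤ ∑ r ∈ Finset.Icc 1 R, (1 / r : ℝ) := by
    refine Finset.sum_nonneg (fun r _ => by positivity)
  have h4δ : (4 / δ) * ∑ r ∈ Finset.Icc 1 R, (1 / r : ℝ) ≤ 4 * (K:ℝ) * (1 + 2 * L) := by
    have hδ4 : 4 / δ = 4 * (K:ℝ) := by
      rw [hδdef]
      field_simp
    rw [hδ4]
    exact mul_le_mul_of_nonneg_left hH (by positivity)
  have hfac : 2 * U + (4 / δ) * ∑ r ∈ Finset.Icc 1 R, (1 / r : ℝ)
      ≤ (6 + 8 / ε) * A * (U + (K:ℝ)) := by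
    have e1 : 2 * U ≤ 2 * A * (U + (K:ℝ)) := by
      nlinarith [mul_nonneg hU0 (sub_nonneg.mpr hA1), mul_nonneg hA0 hKr0.le]
    have e2 : 4 * (K:ℝ) ≤ 4 * A * (U + (K:ℝ)) := by
      nlinarith [mul_nonneg hKr0.le (sub_nonneg.mpr hA1), mul_nonneg hA0 hU0]
    have e3 : 8 * (K:ℝ) * L ≤ (8 / ε) * A * (U + (K:ℝ)) := by
      have h1 : 8 * (K:ℝ) * L ≤ 8 * (K:ℝ) * (A / ε) :=
        mul_le_mul_of_nonneg_left hLA (by positivity)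
      have h2 : 8 * (K:ℝ) * (A / ε) = (8 / ε) * A * (K:ℝ) := by
        field_simp
      have h3 : (8 / ε) * A * (K:ℝ) ≤ (8 / ε) * A * (U + (K:ℝ)) := by
        refine mul_le_mul_of_nonneg_left (by linarith) (by positivity)
      linarith
    have hsum : (6 + 8 / ε) * A * (U + (K:ℝ))
        = 2 * A * (U + (K:ℝ)) + 4 * A * (U + (K:ℝ)) + (8 / ε) * A * (U + (K:ℝ)) := by
      ring
    nlinarith [h4δ]
  calc (2 * U + (4 / δ) * ∑ r ∈ Finset.Icc 1 R, (1 / r : ℝ)) * ∑ p ∈ T, ‖c p‖ ^ 2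
      ≤ ((6 + 8 / ε) * A * (U + (K:ℝ)))
          * ∑ m ∈ Finset.Icc 1 M, ∑ n ∈ Finset.Icc 1 N, ‖a m n‖ ^ 2 := by
        refine mul_le_mul hfac hST (Finset.sum_nonneg (fun p _ => by positivity)) ?_
        positivity
    _ = (6 + 8 / ε) * ((M:ℝ) * N) ^ ε * (U + (M:ℝ) * N)
          * ∑ m ∈ Finset.Icc 1 M, ∑ n ∈ Finset.Icc 1 N, ‖a m n‖ ^ 2 := by
        rw [hA, hKMN]
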